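/- Let P be a finite lattice with bottom 0̂ and top 1̂, let Q be the set of atoms (points) of P and R the set of coatoms (copoints). If 1̂ ≠ sup Q, then μ_P(0̂,1̂) = 0. Dually, if 0̂ ≠ inf R, then μ_P(0̂,1̂) = 0. -/

import Mathlib

open IncidenceAlgebra Finset

open scoped Classical in
private lemma mu_eq_zero_of_ne_sup_atoms
    (P : Type*) [Lattice P] [BoundedOrder P] [Fintype P] [DecidableEq P]
    [LocallyFiniteOrder P] :
    ∀ x : P, x ≠ (univ.filter (fun a : P => IsAtom a ∧ a ≤ x)).sup id →
      mu ℤ (⊥ : P) x = 0 := by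
  intro x
  induction x using WellFoundedLT.induction with
  | ind x ih =>
    intro hx
    set s : P := (univ.filter (fun a : P => IsAtom a ∧ a ≤ x)).sup id with hs
    have hsle : s ≤ x := Finset.sup_le fun a ha => (Finset.mem_filter.1 ha).2.2
    have hslt : s < x := lt_of_le_of_ne hsle (Ne.symm hx)
    have hxbot : x ≠ ⊥ := by
      rintro rfl
      apply hx
      refine le_antisymm bot_le hsle |>.symm ▸ rfl
    -- there is an atom below x
    have hbotlt : (⊥ : P) < x := Ne.bot_lt hxbot
    obtain ⟨a, ha, hax⟩ := (eq_bot_or_exists_atom_le x).resolve_left hxbot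
    have has : a ≤ s := Finset.le_sup (f := id) (by simp [ha, hax])
    have hsbot : s ≠ ⊥ := fun h => ha.1 (le_bot_iff.1 (h ▸ has))
    -- key: μ ⊥ x = -∑_{y ∈ Ico ⊥ x} μ ⊥ y
    have h1 : mu ℤ (⊥ : P) x = -∑ y ∈ Ico (⊥ : P) x, mu ℤ (⊥ : P) y :=
      mu_eq_neg_sum_Ico_of_ne hxbot.symm
    -- the sum over Ico ⊥ x equals the sum over Icc ⊥ s
    have hsub : Icc (⊥ : P) s ⊆ Ico (⊥ : P) x := by
      intro y hy
      rw [Finset.mem_Icc] at hy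
      exact Finset.mem_Ico.2 ⟨bot_le, lt_of_le_of_lt hy.2 hslt⟩
    have h2 : ∑ y ∈ Ico (⊥ : P) x, mu ℤ (⊥ : P) y
        = ∑ y ∈ Icc (⊥ : P) s, mu ℤ (⊥ : P) y := by
      refine (Finset.sum_subset hsub ?_).symm
      intro y hy hy'
      rw [Finset.mem_Ico] at hy
      rw [Finset.mem_Icc] at hy'
      push_neg at hy'
      have hys : ¬ y ≤ s := hy' bot_le
      refine ih y hy.2 ?_
      intro hcontra
      apply hys
      rw [hcontra]
      refine Finset.sup_le fun b hb => ?_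
      rw [Finset.mem_filter] at hb
      exact Finset.le_sup (f := id)
        (Finset.mem_filter.2 ⟨Finset.mem_univ _, hb.2.1, hb.2.2.trans hy.2.le⟩)
    have h3 : ∑ y ∈ Icc (⊥ : P) s, mu ℤ (⊥ : P) y = 0 := by
      rw [sum_Icc_mu_right, if_neg (fun h => hsbot h.symm)]
    rw [h1, h2, h3, neg_zero]

open scoped Classical in
/-- In a finite lattice `P` with atom set `Q` and coatom set `R`: if `⊤ ≠ sup Q` then
`μ_P(⊥,⊤) = 0`, and dually if `⊥ ≠ inf R` then `μ_P(⊥,⊤) = 0`. -/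
theorem mu_eq_zero_of_not_sup_atoms_or_not_inf_coatoms
    (P : Type*) [Lattice P] [BoundedOrder P] [Fintype P] [DecidableEq P]
    [LocallyFiniteOrder P] :
    ((⊤ : P) ≠ (univ.filter (fun a : P => IsAtom a)).sup id → mu ℤ (⊥ : P) (⊤ : P) = 0) ∧
    ((⊥ : P) ≠ (univ.filter (fun a : P => IsCoatom a)).inf id → mu ℤ (⊥ : P) (⊤ : P) = 0) := by
  constructor
  · intro h
    refine mu_eq_zero_of_ne_sup_atoms P ⊤ ?_
    convert h using 3
    simp
  · intro h
    have key : mu ℤ (⊥ : Pᵒᵈ) (⊤ : Pᵒᵈ) = 0 := by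
      refine mu_eq_zero_of_ne_sup_atoms Pᵒᵈ ⊤ ?_
      have hfilter : (univ.filter (fun a : Pᵒᵈ => IsAtom a ∧ a ≤ ⊤))
          = (univ.filter (fun a : P => IsCoatom a)).map OrderDual.toDual.toEmbedding := by
        ext a
        simp only [Finset.mem_filter, Finset.mem_univ, true_and, le_top, and_true,
          Finset.mem_map, Equiv.coe_toEmbedding]
        constructor
        · intro ha
          exact ⟨OrderDual.ofDual a, isAtom_dual_iff_isCoatom.1 ha, rfl⟩
        · rintro ⟨b, hb, rfl⟩
          exact hb.dual
      rw [hfilter, Finset.sup_map]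
      intro hcontra
      apply h
      have h2 : OrderDual.toDual (⊥ : P)
          = OrderDual.toDual ((univ.filter (fun a : P => IsCoatom a)).inf id) := by
        rw [Finset.toDual_inf]
        exact hcontra
      exact OrderDual.toDual.injective h2
    rw [show (⊥ : Pᵒᵈ) = OrderDual.toDual (⊤ : P) from rfl,
      show (⊤ : Pᵒᵈ) = OrderDual.toDual (⊥ : P) from rfl, mu_toDual] at key
    exact key
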